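/- Suppose the matrix Riccati differential equation ρP = Ṗ + AᵀP + PA − (BᵀP + DᵀKC)ᵀΥ⁻¹(BᵀP + DᵀKC) + CᵀKC, P(T) = 0 (with Υ = R + DᵀKD ≻ 0 and K a given continuous matrix function) admits a solution P on [0,T], and the equation for K with terminal value 0 and nonnegative weight admits a solution K ⪰ 0 on [0,T]. Then Π := P − K solves the Π-Riccati equation ρΠ = Π̇ + AᵀΠ + ΠA − ΠBΥ⁻¹BᵀΠ − ΠBΥ⁻¹(BᵀK+DᵀKC) − (BᵀK+DᵀKC)ᵀΥ⁻¹BᵀΠ − Q₀, Π(T) = 0, where Q₀ is the weight in the K-equation; in particular the Π-equation is solvable whenever the P- and K-equations are. -/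

import Mathlib

open Matrix

theorem stmt_15 {n m : ℕ} (ρ T : ℝ) (hT : 0 < T)
    (A : Matrix (Fin n) (Fin n) ℝ) (B : Matrix (Fin n) (Fin m) ℝ)
    (C : Matrix (Fin n) (Fin n) ℝ) (D : Matrix (Fin n) (Fin m) ℝ)
    (Q₀ : Matrix (Fin n) (Fin n) ℝ) (R : Matrix (Fin m) (Fin m) ℝ)
    (hQ₀ : Q₀.PosSemidef) (hR : R.PosDef)
    (K K' P P' : ℝ → Matrix (Fin n) (Fin n) ℝ)
    (Υ : ℝ → Matrix (Fin m) (Fin m) ℝ)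
    (hΥ : ∀ t, Υ t = R + Dᵀ * K t * D)
    (hΥpd : ∀ t ∈ Set.Icc 0 T, (Υ t).PosDef)
    (hKsym : ∀ t, (K t).IsSymm) (hPsym : ∀ t, (P t).IsSymm)
    (hKd : ∀ t ∈ Set.Icc 0 T, ∀ a b, HasDerivAt (fun τ => K τ a b) (K' t a b) t)
    (hPd : ∀ t ∈ Set.Icc 0 T, ∀ a b, HasDerivAt (fun τ => P τ a b) (P' t a b) t)
    (hKpsd : ∀ t ∈ Set.Icc 0 T, (K t).PosSemidef)
    (hKeq : ∀ t ∈ Set.Icc 0 T,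
      ρ • K t = K' t + Aᵀ * K t + K t * A
        - (Bᵀ * K t + Dᵀ * K t * C)ᵀ * (Υ t)⁻¹ * (Bᵀ * K t + Dᵀ * K t * C)
        + Cᵀ * K t * C + Q₀)
    (hKT : K T = 0)
    (hPeq : ∀ t ∈ Set.Icc 0 T,
      ρ • P t = P' t + Aᵀ * P t + P t * A
        - (Bᵀ * P t + Dᵀ * K t * C)ᵀ * (Υ t)⁻¹ * (Bᵀ * P t + Dᵀ * K t * C)
        + Cᵀ * K t * C)
    (hPT : P T = 0) :
    (∀ t ∈ Set.Icc 0 T, ∀ a b,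
        HasDerivAt (fun τ => P τ a b - K τ a b) (P' t a b - K' t a b) t) ∧
    (∀ t ∈ Set.Icc 0 T,
      ρ • (P t - K t) = (P' t - K' t) + Aᵀ * (P t - K t) + (P t - K t) * A
        - (P t - K t) * B * (Υ t)⁻¹ * Bᵀ * (P t - K t)
        - (P t - K t) * B * (Υ t)⁻¹ * (Bᵀ * K t + Dᵀ * K t * C)
        - (Bᵀ * K t + Dᵀ * K t * C)ᵀ * (Υ t)⁻¹ * Bᵀ * (P t - K t)
        - Q₀) ∧
    P T - K T = 0 := by
  refine ⟨fun t ht a b => (hPd t ht a b).sub (hKd t ht a b), fun t ht => ?_, by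
    rw [hPT, hKT, sub_zero]⟩
  have hP : (P t)ᵀ = P t := hPsym t
  have hK : (K t)ᵀ = K t := hKsym t
  have h := congrArg₂ (· - ·) (hPeq t ht) (hKeq t ht)
  rw [← smul_sub] at h
  rw [h]
  simp only [Matrix.transpose_mul, Matrix.transpose_add, Matrix.transpose_transpose, hP, hK]
  simp only [Matrix.mul_add, Matrix.add_mul, Matrix.sub_mul, Matrix.mul_sub, Matrix.mul_assoc, Matrix.smul_mul, Matrix.mul_smul, neg_smul, one_smul, neg_mul, mul_neg]
  abel
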